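/- Let $\eta \in (0, 1/2)$ and $\rho > 0$, and for even $\tau$ suppose $p_{2\tau-1} - p_{2\tau} \geq \frac{\rho}{\beta_{\max}} (2\tau)^{-\eta} > 0$ for each $\tau = 1, \ldots, \lfloor (d-1)/2 \rfloor$ with $d \geq 3$ and $\beta_{\max} > 0$. Then, with $\bar p = \frac{1}{d-1}\sum_{\tau=1}^{d-1} p_\tau$, $\sum_{\tau=1}^{d-1} (p_\tau - \bar p)^2 \geq \frac{\rho^2 2^{-2\eta}}{2\beta_{\max}^2} \cdot \frac{1}{1-2\eta}\left( \left(\lfloor \tfrac{d-1}{2}\rfloor + 1\right)^{1-2\eta} - 1 \right)$. -/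

import Mathlib

theorem stmt_8 (η ρ βmax : ℝ) (hη : 0 < η) (hη2 : η < 1 / 2) (hρ : 0 < ρ)
    (hβ : 0 < βmax) (d : ℕ) (hd : 3 ≤ d) (p : ℕ → ℝ)
    (hdisp : ∀ τ ∈ Finset.Icc 1 ((d - 1) / 2),
      p (2 * τ - 1) - p (2 * τ) ≥ (ρ / βmax) * ((2 * τ : ℝ)) ^ (-η)) :
    ∑ τ ∈ Finset.Icc 1 (d - 1),
        (p τ - (∑ ν ∈ Finset.Icc 1 (d - 1), p ν) / ((d : ℝ) - 1)) ^ 2 ≥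
      (ρ ^ 2 * (2 : ℝ) ^ (-(2 * η)) / (2 * βmax ^ 2)) * (1 / (1 - 2 * η)) *
        (((((d - 1) / 2 : ℕ) : ℝ) + 1) ^ (1 - 2 * η) - 1) := by
  set m : ℕ := (d - 1) / 2 with hm
  set pbar : ℝ := (∑ ν ∈ Finset.Icc 1 (d - 1), p ν) / ((d : ℝ) - 1) with hpbar
  have hs0 : (0:ℝ) < 1 - 2 * η := by linarith
  set s : ℝ := 1 - 2 * η with hsdef
  have hs : (0:ℝ) < s := hs0
  -- pointwise Bernoulli bound
  have hbern : ∀ τ : ℕ, τ ∈ Finset.Icc 1 m →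
      ((τ:ℝ)+1) ^ s - (τ:ℝ) ^ s ≤ s * (τ:ℝ) ^ (-(2*η)) := by
    intro τ hτ
    have hτ1 : 1 ≤ τ := (Finset.mem_Icc.mp hτ).1
    have ht : (0:ℝ) < (τ:ℝ) := by exact_mod_cast hτ1
    have h1 : ((τ:ℝ)+1) = (τ:ℝ) * (1 + 1/(τ:ℝ)) := by field_simp
    have h2 : ((τ:ℝ)+1) ^ s = (τ:ℝ) ^ s * (1 + 1/(τ:ℝ)) ^ s := by
      rw [h1, Real.mul_rpow ht.le (by positivity)]
    have h3 : (1 + 1/(τ:ℝ)) ^ s ≤ 1 + s * (1/(τ:ℝ)) :=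
      rpow_one_add_le_one_add_mul_self (le_trans (by norm_num : (-1:ℝ) ≤ 0) (by positivity)) hs.le (by
        simp only [hsdef]; linarith)
    have h4 : (τ:ℝ) ^ s * (1/(τ:ℝ)) = (τ:ℝ) ^ (-(2*η)) := by
      rw [one_div, ← Real.rpow_neg_one (τ:ℝ), ← Real.rpow_add ht]
      congr 1; simp only [hsdef]; ring
    have h5 : ((τ:ℝ)+1) ^ s ≤ (τ:ℝ) ^ s + s * ((τ:ℝ) ^ (-(2*η))) := by
      calc ((τ:ℝ)+1) ^ s = (τ:ℝ) ^ s * (1 + 1/(τ:ℝ)) ^ s := h2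
        _ ≤ (τ:ℝ) ^ s * (1 + s * (1/(τ:ℝ))) := by
            exact mul_le_mul_of_nonneg_left h3 (Real.rpow_nonneg ht.le _)
        _ = (τ:ℝ) ^ s + s * ((τ:ℝ) ^ s * (1/(τ:ℝ))) := by ring
        _ = (τ:ℝ) ^ s + s * ((τ:ℝ) ^ (-(2*η))) := by rw [h4]
    linarith
  -- telescoping
  have htel : ∀ n : ℕ, ∑ τ ∈ Finset.Icc 1 n, (((τ:ℝ)+1) ^ s - (τ:ℝ) ^ s)
      = ((n:ℝ)+1) ^ s - 1 := by
    intro n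
    induction n with
    | zero => simp [Real.one_rpow]
    | succ k ih =>
        rw [Finset.sum_Icc_succ_top (by omega : 1 ≤ k + 1), ih]
        push_cast
        ring
  have hpow : (((m:ℝ)+1) ^ s - 1) ≤ s * ∑ τ ∈ Finset.Icc 1 m, (τ:ℝ) ^ (-(2*η)) := by
    rw [Finset.mul_sum, ← htel m]
    exact Finset.sum_le_sum hbern
  -- pairing bound
  have h2m : 2 * m ≤ d - 1 := by omega
  set S : Finset ℕ := (Finset.Icc 1 m).biUnion (fun τ => {2*τ-1, 2*τ}) with hS
  have hSsub : S ⊆ Finset.Icc 1 (d-1) := by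
    intro i hi
    simp only [hS, Finset.mem_biUnion, Finset.mem_insert, Finset.mem_singleton,
      Finset.mem_Icc] at hi ⊢
    obtain ⟨τ, ⟨h1, h2⟩, h3 | h3⟩ := hi <;> omega
  have hdisj : ∀ x ∈ Finset.Icc 1 m, ∀ y ∈ Finset.Icc 1 m, x ≠ y →
      Disjoint ({2*x-1, 2*x} : Finset ℕ) {2*y-1, 2*y} := by
    intro x hx y hy hxy
    simp only [Finset.mem_Icc] at hx hy
    rw [Finset.disjoint_left]
    intro a ha hb
    simp only [Finset.mem_insert, Finset.mem_singleton] at ha hb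
    omega
  have hLHS : ∑ τ ∈ Finset.Icc 1 (d - 1), (p τ - pbar) ^ 2 ≥
      ∑ τ ∈ Finset.Icc 1 m, ((p (2*τ-1) - pbar)^2 + (p (2*τ) - pbar)^2) := by
    have h1 : ∑ i ∈ S, (p i - pbar)^2
        = ∑ τ ∈ Finset.Icc 1 m, ((p (2*τ-1) - pbar)^2 + (p (2*τ) - pbar)^2) := by
      rw [hS, Finset.sum_biUnion hdisj]
      apply Finset.sum_congr rfl
      intro τ hτ
      have hτ1 : 1 ≤ τ := (Finset.mem_Icc.mp hτ).1
      rw [Finset.sum_pair (by omega)]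
    rw [← h1]
    exact Finset.sum_le_sum_of_subset_of_nonneg hSsub (fun i _ _ => sq_nonneg _)
  -- per-pair lower bound
  have hpair : ∀ τ ∈ Finset.Icc 1 m,
      (1/2) * (ρ/βmax)^2 * ((2:ℝ) ^ (-(2*η)) * (τ:ℝ) ^ (-(2*η)))
        ≤ (p (2*τ-1) - pbar)^2 + (p (2*τ) - pbar)^2 := by
    intro τ hτ
    have hτ1 : 1 ≤ τ := (Finset.mem_Icc.mp hτ).1
    have ht : (0:ℝ) < (τ:ℝ) := by exact_mod_cast hτ1
    have h2t : (0:ℝ) < 2 * (τ:ℝ) := by linarith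
    have hge := hdisp τ hτ
    push_cast at hge
    have hrpos : (0:ℝ) ≤ (ρ/βmax) * (2 * (τ:ℝ)) ^ (-η) := by positivity
    have hsq : ((ρ/βmax) * (2 * (τ:ℝ)) ^ (-η))^2 ≤ (p (2*τ-1) - p (2*τ))^2 :=
      pow_le_pow_left₀ hrpos hge 2
    have hrw : ((ρ/βmax) * (2 * (τ:ℝ)) ^ (-η))^2
        = (ρ/βmax)^2 * ((2:ℝ) ^ (-(2*η)) * (τ:ℝ) ^ (-(2*η))) := by
      rw [mul_pow, sq ((2 * (τ:ℝ)) ^ (-η)), ← Real.rpow_add h2t]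
      rw [show -η + -η = -(2*η) by ring]
      rw [Real.mul_rpow (by norm_num) ht.le]
    nlinarith [sq_nonneg (p (2*τ-1) + p (2*τ) - 2 * pbar),
      sq_nonneg (p (2*τ-1) - p (2*τ))]
  have hsum2 : ∑ τ ∈ Finset.Icc 1 m, ((p (2*τ-1) - pbar)^2 + (p (2*τ) - pbar)^2)
      ≥ (1/2) * (ρ/βmax)^2 * (2:ℝ) ^ (-(2*η)) *
        ∑ τ ∈ Finset.Icc 1 m, (τ:ℝ) ^ (-(2*η)) := by
    rw [Finset.mul_sum]
    apply Finset.sum_le_sum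
    intro τ hτ
    have h := hpair τ hτ
    linarith
  -- combine
  have hfin : (ρ ^ 2 * (2:ℝ) ^ (-(2*η)) / (2 * βmax ^ 2)) * (1 / s) * (((m:ℝ)+1) ^ s - 1)
      ≤ (1/2) * (ρ/βmax)^2 * (2:ℝ) ^ (-(2*η)) *
        ∑ τ ∈ Finset.Icc 1 m, (τ:ℝ) ^ (-(2*η)) := by
    set B : ℝ := ∑ τ ∈ Finset.Icc 1 m, (τ:ℝ) ^ (-(2*η)) with hB
    have h1 : (ρ ^ 2 * (2:ℝ) ^ (-(2*η)) / (2 * βmax ^ 2)) * (1 / s) * (((m:ℝ)+1) ^ s - 1)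
        ≤ (ρ ^ 2 * (2:ℝ) ^ (-(2*η)) / (2 * βmax ^ 2)) * (1 / s) * (s * B) := by
      apply mul_le_mul_of_nonneg_left hpow (by positivity)
    have h2 : (ρ ^ 2 * (2:ℝ) ^ (-(2*η)) / (2 * βmax ^ 2)) * (1 / s) * (s * B)
        = (1/2) * (ρ/βmax)^2 * (2:ℝ) ^ (-(2*η)) * B := by
      field_simp
    linarith
  calc ∑ τ ∈ Finset.Icc 1 (d - 1), (p τ - pbar) ^ 2
      ≥ ∑ τ ∈ Finset.Icc 1 m, ((p (2*τ-1) - pbar)^2 + (p (2*τ) - pbar)^2) := hLHS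
    _ ≥ (1/2) * (ρ/βmax)^2 * (2:ℝ) ^ (-(2*η)) *
          ∑ τ ∈ Finset.Icc 1 m, (τ:ℝ) ^ (-(2*η)) := hsum2
    _ ≥ (ρ ^ 2 * (2:ℝ) ^ (-(2*η)) / (2 * βmax ^ 2)) * (1 / s) * (((m:ℝ)+1) ^ s - 1) := hfin
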